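/- The centralizer in SU(p,q) (p > q) of the set of matrices of the form [[α·I_q, 0, β·I_q],[0, I_{p−q}, 0],[conj(β)·I_q, 0, conj(α)·I_q]] with |α|² − |β|² = 1 equals the set of block-diagonal matrices diag(U, F, U) with U ∈ U(q), F ∈ U(p−q), and det(U)²·det(F) = 1. -/
import Mathlib


open Matrix

/-- The form `J = diag(I_q, I_{p-q}, -I_q)` defining `SU(p,q)` with block
ordering `q, p-q, q`. -/
def Jpq (p q : ℕ) : Matrix (Fin q ⊕ (Fin (p - q) ⊕ Fin q)) (Fin q ⊕ (Fin (p - q) ⊕ Fin q)) ℂ :=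
  Matrix.diagonal (fun i => match i with
    | Sum.inl _ => 1
    | Sum.inr (Sum.inl _) => 1
    | Sum.inr (Sum.inr _) => -1)

/-- The image of `SU(1,1)` under the standard embedding:
`[[α·I_q, 0, β·I_q],[0, I_{p-q}, 0],[β̄·I_q, 0, ᾱ·I_q]]`. -/
def EEmb (p q : ℕ) (α β : ℂ) :
    Matrix (Fin q ⊕ (Fin (p - q) ⊕ Fin q)) (Fin q ⊕ (Fin (p - q) ⊕ Fin q)) ℂ :=
  Matrix.of fun i j => match i, j with
    | Sum.inl i', Sum.inl j' => if i' = j' then α else 0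
    | Sum.inl i', Sum.inr (Sum.inr j') => if i' = j' then β else 0
    | Sum.inr (Sum.inl i'), Sum.inr (Sum.inl j') => if i' = j' then 1 else 0
    | Sum.inr (Sum.inr i'), Sum.inl j' => if i' = j' then (starRingEnd ℂ) β else 0
    | Sum.inr (Sum.inr i'), Sum.inr (Sum.inr j') => if i' = j' then (starRingEnd ℂ) α else 0
    | _, _ => 0

/-- The block-diagonal matrix `diag(U, F, U)`. -/
def blockDiag3 (p q : ℕ) (U : Matrix (Fin q) (Fin q) ℂ)
    (F : Matrix (Fin (p - q)) (Fin (p - q)) ℂ) :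
    Matrix (Fin q ⊕ (Fin (p - q) ⊕ Fin q)) (Fin q ⊕ (Fin (p - q) ⊕ Fin q)) ℂ :=
  Matrix.of fun i j => match i, j with
    | Sum.inl i', Sum.inl j' => U i' j'
    | Sum.inr (Sum.inl i'), Sum.inr (Sum.inl j') => F i' j'
    | Sum.inr (Sum.inr i'), Sum.inr (Sum.inr j') => U i' j'
    | _, _ => 0

lemma blockDiag3_eq (p q : ℕ) (U : Matrix (Fin q) (Fin q) ℂ)
    (F : Matrix (Fin (p - q)) (Fin (p - q)) ℂ) :
    blockDiag3 p q U F = Matrix.fromBlocks U 0 0 (Matrix.fromBlocks F 0 0 U) := by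
  ext i j
  rcases i with i | i | i <;> rcases j with j | j | j <;>
    simp [blockDiag3, Matrix.fromBlocks]

lemma sqrt2C_ne_one : ((Real.sqrt 2 : ℝ) : ℂ) ≠ 1 := by
  norm_cast
  rw [Real.sqrt_eq_one]
  norm_num

theorem stmt16 (p q : ℕ) (hq : 1 ≤ q) (hpq : q < p)
    (M : Matrix (Fin q ⊕ (Fin (p - q) ⊕ Fin q)) (Fin q ⊕ (Fin (p - q) ⊕ Fin q)) ℂ)
    (hM : Mᴴ * Jpq p q * M = Jpq p q) (hdet : M.det = 1) :
    (∀ α β : ℂ, ‖α‖ ^ 2 - ‖β‖ ^ 2 = 1 →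
        M * EEmb p q α β = EEmb p q α β * M) ↔
      ∃ U : Matrix (Fin q) (Fin q) ℂ, ∃ F : Matrix (Fin (p - q)) (Fin (p - q)) ℂ,
        Uᴴ * U = 1 ∧ Fᴴ * F = 1 ∧ U.det ^ 2 * F.det = 1 ∧
        M = blockDiag3 p q U F := by
  constructor
  · intro h
    set s : ℂ := ((Real.sqrt 2 : ℝ) : ℂ) with hs
    have hnorm1 : ‖s‖ ^ 2 - ‖(1:ℂ)‖ ^ 2 = 1 := by
      simp [hs, Real.sq_sqrt]; norm_num
    have hnormI : ‖s‖ ^ 2 - ‖Complex.I‖ ^ 2 = 1 := by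
      simp [hs, Real.sq_sqrt]; norm_num
    have h1 := h s 1 hnorm1
    have h2 := h s Complex.I hnormI
    have hs1 : (1 : ℂ) - s ≠ 0 := by
      intro hc
      exact sqrt2C_ne_one (by linear_combination -hc)
    have hconj : (starRingEnd ℂ) s = s := Complex.conj_ofReal _
    set U : Matrix (Fin q) (Fin q) ℂ := fun i j => M (Sum.inl i) (Sum.inl j) with hU
    set F : Matrix (Fin (p - q)) (Fin (p - q)) ℂ :=
      fun i j => M (Sum.inr (Sum.inl i)) (Sum.inr (Sum.inl j)) with hF
    have hI1 : (1 : ℂ) - Complex.I ≠ 0 := by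
      intro hc
      have : Complex.I = 1 := by linear_combination -hc
      simp [Complex.ext_iff] at this
    have hI2 : (1 : ℂ) + Complex.I ≠ 0 := by
      intro hc
      have : Complex.I = -1 := by linear_combination hc
      simp [Complex.ext_iff] at this
    have hMeq : M = blockDiag3 p q U F := by
      ext i j
      rcases i with i | i | i <;> rcases j with j | j | j
      · rfl
      · -- M12 = 0
        have e := congrFun (congrFun h1 (Sum.inl i)) (Sum.inr (Sum.inl j))
        have e' := congrFun (congrFun h2 (Sum.inl i)) (Sum.inr (Sum.inl j))
        simp only [EEmb, Matrix.mul_apply, Matrix.of_apply, Fintype.sum_sum_type, mul_ite,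
          ite_mul, mul_zero, zero_mul, mul_one, one_mul, Finset.sum_ite_eq, Finset.sum_ite_eq',
          Finset.mem_univ, if_true, Finset.sum_const_zero, add_zero, zero_add] at e e'
        have h32 : M (Sum.inr (Sum.inr i)) (Sum.inr (Sum.inl j)) = 0 := by
          have h0 : ((1:ℂ) - Complex.I) * M (Sum.inr (Sum.inr i)) (Sum.inr (Sum.inl j)) = 0 := by
            linear_combination e' - e
          exact (mul_eq_zero.mp h0).resolve_left hI1
        have h0 : ((1:ℂ) - s) * M (Sum.inl i) (Sum.inr (Sum.inl j)) = 0 := by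
          linear_combination e + h32
        simpa [blockDiag3] using (mul_eq_zero.mp h0).resolve_left hs1
      · -- M13 = 0
        have e := congrFun (congrFun h1 (Sum.inl i)) (Sum.inl j)
        have e' := congrFun (congrFun h2 (Sum.inl i)) (Sum.inl j)
        simp only [EEmb, Matrix.mul_apply, Matrix.of_apply, Fintype.sum_sum_type, mul_ite,
          ite_mul, mul_zero, zero_mul, mul_one, one_mul, Finset.sum_ite_eq, Finset.sum_ite_eq',
          Finset.mem_univ, if_true, Finset.sum_const_zero, add_zero, zero_add, _root_.map_one,
          Complex.conj_I, hconj] at e e'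
        have h0 : (2 * Complex.I) * M (Sum.inl i) (Sum.inr (Sum.inr j)) = 0 := by
          linear_combination Complex.I * e - e'
        have := (mul_eq_zero.mp h0).resolve_left (by simp [Complex.I_ne_zero])
        simpa [blockDiag3] using this
      · -- M21 = 0
        have e := congrFun (congrFun h1 (Sum.inr (Sum.inl i))) (Sum.inl j)
        have e' := congrFun (congrFun h2 (Sum.inr (Sum.inl i))) (Sum.inl j)
        simp only [EEmb, Matrix.mul_apply, Matrix.of_apply, Fintype.sum_sum_type, mul_ite,
          ite_mul, mul_zero, zero_mul, mul_one, one_mul, Finset.sum_ite_eq, Finset.sum_ite_eq',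
          Finset.mem_univ, if_true, Finset.sum_const_zero, add_zero, zero_add, _root_.map_one,
          Complex.conj_I, hconj] at e e'
        have h23 : M (Sum.inr (Sum.inl i)) (Sum.inr (Sum.inr j)) = 0 := by
          have h0 : ((1:ℂ) + Complex.I) * M (Sum.inr (Sum.inl i)) (Sum.inr (Sum.inr j)) = 0 := by
            linear_combination e - e'
          exact (mul_eq_zero.mp h0).resolve_left hI2
        have h0 : ((1:ℂ) - s) * M (Sum.inr (Sum.inl i)) (Sum.inl j) = 0 := by
          linear_combination -e + h23
        simpa [blockDiag3] using (mul_eq_zero.mp h0).resolve_left hs1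
      · rfl
      · -- M23 = 0
        have e := congrFun (congrFun h1 (Sum.inr (Sum.inl i))) (Sum.inl j)
        have e' := congrFun (congrFun h2 (Sum.inr (Sum.inl i))) (Sum.inl j)
        simp only [EEmb, Matrix.mul_apply, Matrix.of_apply, Fintype.sum_sum_type, mul_ite,
          ite_mul, mul_zero, zero_mul, mul_one, one_mul, Finset.sum_ite_eq, Finset.sum_ite_eq',
          Finset.mem_univ, if_true, Finset.sum_const_zero, add_zero, zero_add, _root_.map_one,
          Complex.conj_I, hconj] at e e'
        have h0 : ((1:ℂ) + Complex.I) * M (Sum.inr (Sum.inl i)) (Sum.inr (Sum.inr j)) = 0 := by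
          linear_combination e - e'
        simpa [blockDiag3] using (mul_eq_zero.mp h0).resolve_left hI2
      · -- M31 = 0
        have e := congrFun (congrFun h1 (Sum.inl i)) (Sum.inl j)
        have e' := congrFun (congrFun h2 (Sum.inl i)) (Sum.inl j)
        simp only [EEmb, Matrix.mul_apply, Matrix.of_apply, Fintype.sum_sum_type, mul_ite,
          ite_mul, mul_zero, zero_mul, mul_one, one_mul, Finset.sum_ite_eq, Finset.sum_ite_eq',
          Finset.mem_univ, if_true, Finset.sum_const_zero, add_zero, zero_add, _root_.map_one,
          Complex.conj_I, hconj] at e e'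
        have h0 : (2 * Complex.I) * M (Sum.inr (Sum.inr i)) (Sum.inl j) = 0 := by
          linear_combination -Complex.I * e - e'
        have := (mul_eq_zero.mp h0).resolve_left (by simp [Complex.I_ne_zero])
        simpa [blockDiag3] using this
      · -- M32 = 0
        have e := congrFun (congrFun h1 (Sum.inl i)) (Sum.inr (Sum.inl j))
        have e' := congrFun (congrFun h2 (Sum.inl i)) (Sum.inr (Sum.inl j))
        simp only [EEmb, Matrix.mul_apply, Matrix.of_apply, Fintype.sum_sum_type, mul_ite,
          ite_mul, mul_zero, zero_mul, mul_one, one_mul, Finset.sum_ite_eq, Finset.sum_ite_eq',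
          Finset.mem_univ, if_true, Finset.sum_const_zero, add_zero, zero_add, _root_.map_one,
          Complex.conj_I, hconj] at e e'
        have h0 : ((1:ℂ) - Complex.I) * M (Sum.inr (Sum.inr i)) (Sum.inr (Sum.inl j)) = 0 := by
          linear_combination e' - e
        simpa [blockDiag3] using (mul_eq_zero.mp h0).resolve_left hI1
      · -- M33 = M11
        have e := congrFun (congrFun h1 (Sum.inl i)) (Sum.inr (Sum.inr j))
        simp only [EEmb, Matrix.mul_apply, Matrix.of_apply, Fintype.sum_sum_type, mul_ite,
          ite_mul, mul_zero, zero_mul, mul_one, one_mul, Finset.sum_ite_eq, Finset.sum_ite_eq',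
          Finset.mem_univ, if_true, Finset.sum_const_zero, add_zero, zero_add, _root_.map_one,
          Complex.conj_I, hconj] at e
        have : M (Sum.inr (Sum.inr i)) (Sum.inr (Sum.inr j)) = M (Sum.inl i) (Sum.inl j) := by
          linear_combination -e
        simpa [blockDiag3, hU] using this
    refine ⟨U, F, ?_, ?_, ?_, hMeq⟩
    · ext i j
      have e := congrFun (congrFun hM (Sum.inl i)) (Sum.inl j)
      rw [hMeq] at e
      simpa [blockDiag3, Jpq, Matrix.mul_apply, Matrix.conjTranspose_apply,
        Fintype.sum_sum_type, Matrix.diagonal, Matrix.one_apply,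
        Finset.sum_ite_eq, Finset.sum_ite_eq'] using e
    · ext i j
      have e := congrFun (congrFun hM (Sum.inr (Sum.inl i))) (Sum.inr (Sum.inl j))
      rw [hMeq] at e
      simpa [blockDiag3, Jpq, Matrix.mul_apply, Matrix.conjTranspose_apply,
        Fintype.sum_sum_type, Matrix.diagonal, Matrix.one_apply,
        Finset.sum_ite_eq, Finset.sum_ite_eq'] using e
    · rw [hMeq, blockDiag3_eq] at hdet
      rw [Matrix.det_fromBlocks_zero₂₁, Matrix.det_fromBlocks_zero₂₁] at hdet
      linear_combination hdet
  · rintro ⟨U, F, hU, hF, hUF, rfl⟩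
    intro α β _
    ext i j
    rcases i with i | i | i <;> rcases j with j | j | j <;>
      simp [blockDiag3, EEmb, Matrix.mul_apply, Fintype.sum_sum_type,
        Finset.sum_ite_eq, Finset.sum_ite_eq'] <;> ring
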